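/- (Garside normal form for B₃, Xu) Every element α ∈ B₃ can be expressed as α = δᵘ·∏_{j=1}^{ℓ} a_{i_j} where u ∈ ℤ and [i₁, …, i_ℓ] is a (possibly empty) nondecreasing word, and this expression is unique: the integer u and the nondecreasing word are uniquely determined by α. -/

import Mathlib

namespace Braid

/-- Relations of the dual (band-generator) presentation of the 3-braid group:
`a (i+1) * a i = a (i+2) * a (i+1)` for all `i : ZMod 3`. -/
def braidRels : Set (FreeGroup (ZMod 3)) :=
  { r | ∃ i : ZMod 3,
      r = FreeGroup.of (i + 1) * FreeGroup.of i *
          (FreeGroup.of (i + 2) * FreeGroup.of (i + 1))⁻¹ }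

/-- The 3-braid group with the band-generator presentation. -/
abbrev B3 := PresentedGroup braidRels

/-- The band generators `a i`, `i : ZMod 3`. -/
def a (i : ZMod 3) : B3 := PresentedGroup.of i

/-- The fundamental element `δ = a₂ * a₁`. -/
def δ : B3 := a 2 * a 1

/-- The submonoid of positive braids. -/
def Pos : Submonoid B3 := Submonoid.closure (Set.range a)

/-- The exponent-sum homomorphism, sending each generator to `1 : ℤ`. -/
def eHom : B3 →* Multiplicative ℤ :=
  PresentedGroup.toGroup (f := fun _ => Multiplicative.ofAdd (1 : ℤ)) (by
    rintro r ⟨i, rfl⟩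
    simp only [map_mul, map_inv, FreeGroup.lift_apply_of]
    group)

/-- The exponent sum (letter length on positive braids) as an integer. -/
def elen (x : B3) : ℤ := Multiplicative.toAdd (eHom x)

/-- The right complement `X* = X⁻¹ * δ^{e(X)}`. -/
def rc (X : B3) : B3 := X⁻¹ * δ ^ elen X

/-- The `n`-th power of the rotation automorphism `τ`: `τ^n (x) = δ^{-n} * x * δ^n`. -/
def tauPow (n : ℤ) (x : B3) : B3 := δ ^ (-n) * x * δ ^ n

/-- The positive braid represented by a list of generator indices. -/
def wordProd (l : List (ZMod 3)) : B3 := (l.map a).prod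

/-- A word is nondecreasing if each letter index is the previous one or the previous one
plus `1` (mod 3). -/
def NDWord (l : List (ZMod 3)) : Prop :=
  l.Chain' (fun x y => y = x ∨ y = x + 1)

/-- The syllable number of a word: the number of maximal constant blocks. -/
def syl : List (ZMod 3) → ℕ
  | [] => 0
  | [_] => 1
  | x :: y :: t => (if x = y then 0 else 1) + syl (y :: t)

/-- The permutations underlying the band generators. -/
def perm3 (i : ZMod 3) : Equiv.Perm (Fin 3) :=
  if i = 0 then Equiv.swap 0 2 else if i = 1 then Equiv.swap 0 1 else Equiv.swap 1 2

lemma perm3_rel : ∀ i : ZMod 3,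
    perm3 (i + 1) * perm3 i * (perm3 (i + 2) * perm3 (i + 1))⁻¹ = 1 := by decide

/-- The homomorphism to the symmetric group on 3 letters (underlying permutation). -/
def permOf : B3 →* Equiv.Perm (Fin 3) :=
  PresentedGroup.toGroup (f := perm3) (by
    rintro r ⟨i, rfl⟩
    simp only [map_mul, map_inv, FreeGroup.lift_apply_of]
    exact perm3_rel i)

/-- The set of band generators and their inverses. -/
def genSet : Set B3 := Set.range a ∪ Set.range (fun i => (a i)⁻¹)

/-- The band-generator word length of a 3-braid. -/
noncomputable def wordLen (x : B3) : ℕ :=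
  sInf { n | ∃ s : List B3, s.length = n ∧ (∀ g ∈ s, g ∈ genSet) ∧ s.prod = x }

/-- The minimal band-generator word length in the conjugacy class. -/
noncomputable def minConjLen (x : B3) : ℕ :=
  sInf { n | ∃ y, IsConj x y ∧ wordLen y = n }

/-- `α` is a summit element with summit exponent `u` if `δ^{-u} * α` is positive and `u` is
the maximal such exponent over the conjugacy class. -/
def IsSummit (α : B3) (u : ℤ) : Prop :=
  δ ^ (-u) * α ∈ Pos ∧ ∀ β : B3, IsConj α β → ∀ v : ℤ, δ ^ (-v) * β ∈ Pos → v ≤ u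

/- ## auxiliary development -/

/-- nondecreasingness of a reversed word -/
def RND (l : List (ZMod 3)) : Prop := l.Chain' (fun x y => x = y ∨ x = y + 1)

def rstep (j : ZMod 3) : ℤ × List (ZMod 3) → ℤ × List (ZMod 3)
  | (u, []) => (u, [j])
  | (u, i :: t) => if j = i ∨ j = i + 1 then (u, j :: i :: t) else (u + 1, t.map (· + 1))

def rstep' (j : ZMod 3) : ℤ × List (ZMod 3) → ℤ × List (ZMod 3)
  | (u, []) => (u - 1, [j + 1])
  | (u, i :: t) => if i = j then (u, t) else (u - 1, (j + 1) :: (i :: t).map (· + 2))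

lemma z1 : ∀ i j : ZMod 3, ¬(j = i ∨ j = i + 1) → j = i + 2 := by decide
lemma z2 : ∀ j : ZMod 3, ¬(j = j + 1 ∨ j = j + 1 + 1) := by decide
lemma z3 : ∀ i : ZMod 3, i + 2 + 1 = i := by decide
lemma z4 : ∀ i k : ZMod 3, (i = k ∨ i = k + 1) → ¬(k + 1 = i + 2) := by decide
lemma z5 : ∀ i j : ZMod 3, ¬ i = j → (j + 1 = i + 2 ∨ j + 1 = i + 2 + 1) := by decide
lemma z6 : ∀ k : ZMod 3, k + 1 + 2 = k := by decide
lemma z7 : ∀ i k : ZMod 3, ¬(i + 1 = k ∨ i + 1 = k + 1) → k = i + 2 := by decide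
lemma z8 : ∀ i k' : ZMod 3, (i + 2 = k' ∨ i + 2 = k' + 1) → (i = k' + 1 ∨ i = k' + 1 + 1) := by decide

lemma rstep_nil (j : ZMod 3) (u : ℤ) : rstep j (u, []) = (u, [j]) := rfl

lemma rstep_cons_pos {j i : ZMod 3} (hc : j = i ∨ j = i + 1) (u : ℤ) (t : List (ZMod 3)) :
    rstep j (u, i :: t) = (u, j :: i :: t) := by simp only [rstep, if_pos hc]

lemma rstep_cons_neg {j i : ZMod 3} (hc : ¬(j = i ∨ j = i + 1)) (u : ℤ) (t : List (ZMod 3)) :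
    rstep j (u, i :: t) = (u + 1, t.map (· + 1)) := by simp only [rstep, if_neg hc]

lemma rstep'_nil (j : ZMod 3) (u : ℤ) : rstep' j (u, []) = (u - 1, [j + 1]) := rfl

lemma rstep'_cons_pos {j i : ZMod 3} (hc : i = j) (u : ℤ) (t : List (ZMod 3)) :
    rstep' j (u, i :: t) = (u, t) := by simp only [rstep', if_pos hc]

lemma rstep'_cons_neg {j i : ZMod 3} (hc : ¬ i = j) (u : ℤ) (t : List (ZMod 3)) :
    rstep' j (u, i :: t) = (u - 1, (j + 1) :: (i :: t).map (· + 2)) := by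
  simp only [rstep', if_neg hc]

lemma map12 : ∀ l : List (ZMod 3), (l.map (· + 1)).map (· + 2) = l := by
  intro l
  rw [List.map_map]
  have : ((· + 2) ∘ (· + 1) : ZMod 3 → ZMod 3) = id := by funext x; revert x; decide
  rw [this, List.map_id]

lemma map21 : ∀ l : List (ZMod 3), (l.map (· + 2)).map (· + 1) = l := by
  intro l
  rw [List.map_map]
  have : ((· + 1) ∘ (· + 2) : ZMod 3 → ZMod 3) = id := by funext x; revert x; decide
  rw [this, List.map_id]

lemma rnd_map1 {l : List (ZMod 3)} (h : RND l) : RND (l.map (· + 1)) := by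
  rw [RND]; show List.IsChain _ _; rw [List.isChain_map]
  refine h.imp ?_
  intro x y hxy
  rcases hxy with h1 | h1 <;> simp [h1]

lemma rnd_map2 {l : List (ZMod 3)} (h : RND l) : RND (l.map (· + 2)) := by
  rw [RND]; show List.IsChain _ _; rw [List.isChain_map]
  refine h.imp ?_
  intro x y hxy
  rcases hxy with h1 | h1 <;> [left; right] <;> rw [h1] <;> ring

lemma rnd_rel {i k : ZMod 3} {t : List (ZMod 3)} (h : RND (i :: (k :: t))) :
    i = k ∨ i = k + 1 :=
  (List.isChain_cons_cons.mp h).1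

lemma rnd_rstep (j : ZMod 3) {p : ℤ × List (ZMod 3)} (h : RND p.2) :
    RND (rstep j p).2 := by
  obtain ⟨u, l⟩ := p
  match l with
  | [] => exact List.isChain_singleton j
  | i :: t =>
    by_cases hc : j = i ∨ j = i + 1
    · rw [rstep_cons_pos hc]
      exact List.IsChain.cons_cons hc h
    · rw [rstep_cons_neg hc]
      exact rnd_map1 h.tail

lemma rnd_rstep' (j : ZMod 3) {p : ℤ × List (ZMod 3)} (h : RND p.2) :
    RND (rstep' j p).2 := by
  obtain ⟨u, l⟩ := p
  match l with
  | [] => exact List.isChain_singleton _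
  | i :: t =>
    by_cases hc : i = j
    · rw [rstep'_cons_pos hc]
      exact h.tail
    · rw [rstep'_cons_neg hc]
      refine (rnd_map2 h).cons ?_
      exact fun y hy => by simp at hy; subst hy; exact z5 i j hc

lemma rstep'_rstep (j : ZMod 3) {p : ℤ × List (ZMod 3)} (h : RND p.2) :
    rstep' j (rstep j p) = p := by
  obtain ⟨u, l⟩ := p
  match l with
  | [] => rw [rstep_nil, rstep'_cons_pos rfl]
  | i :: t =>
    by_cases hc : j = i ∨ j = i + 1
    · rw [rstep_cons_pos hc, rstep'_cons_pos rfl]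
    · have hj : j = i + 2 := z1 i j hc
      rw [rstep_cons_neg hc]
      match t with
      | [] =>
        rw [List.map_nil, rstep'_nil, hj, z3 i]
        simp only [Prod.mk.injEq]
        exact ⟨by ring, by trivial⟩
      | k :: t' =>
        have hk : i = k ∨ i = k + 1 := rnd_rel h
        have hne : ¬ (k + 1 = j) := by rw [hj]; exact z4 i k hk
        rw [List.map_cons, rstep'_cons_neg hne, ← List.map_cons (f := (· + 1)) (a := k) (l := t'),
          map12, hj, z3 i]
        simp only [Prod.mk.injEq]
        exact ⟨by ring, by trivial⟩

lemma rstep_rstep' (j : ZMod 3) {p : ℤ × List (ZMod 3)} (h : RND p.2) :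
    rstep j (rstep' j p) = p := by
  obtain ⟨u, l⟩ := p
  match l with
  | [] =>
    rw [rstep'_nil, rstep_cons_neg (z2 j), List.map_nil]
    simp only [Prod.mk.injEq]
    exact ⟨by ring, by trivial⟩
  | i :: t =>
    by_cases hc : i = j
    · rw [rstep'_cons_pos hc]
      match t with
      | [] => rw [rstep_nil, hc]
      | k :: t' =>
        have hk : i = k ∨ i = k + 1 := rnd_rel h
        rw [← hc, rstep_cons_pos hk]
    · rw [rstep'_cons_neg hc, rstep_cons_neg (z2 j), map21]
      simp only [Prod.mk.injEq]
      exact ⟨by ring, by trivial⟩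

/-- multiplying by `δ` on the right: shared value of `rstep i ∘ rstep (i+1)`. -/
lemma rstep_delta (i : ZMod 3) {p : ℤ × List (ZMod 3)} (h : RND p.2) :
    rstep i (rstep (i + 1) p) = (p.1 + 1, p.2.map (· + 1)) := by
  obtain ⟨u, l⟩ := p
  match l with
  | [] => rw [rstep_nil, rstep_cons_neg (z2 i), List.map_nil]
  | k :: t =>
    by_cases hc : i + 1 = k ∨ i + 1 = k + 1
    · rw [rstep_cons_pos hc, rstep_cons_neg (z2 i)]
    · have hk : k = i + 2 := z7 i k hc
      rw [rstep_cons_neg hc]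
      match t with
      | [] =>
        rw [List.map_nil, rstep_nil, List.map_cons, List.map_nil, hk, z3 i]
      | k' :: t' =>
        have hk' : k = k' ∨ k = k' + 1 := rnd_rel h
        have hcond : i = k' + 1 ∨ i = k' + 1 + 1 := by
          rw [hk] at hk'; exact z8 i k' hk'
        rw [List.map_cons, rstep_cons_pos hcond, hk]
        simp only [List.map_cons, z3 i]

/- ## normal forms -/

def NF : Type := {p : ℤ × List (ZMod 3) // RND p.2}

def Req (j : ZMod 3) : Equiv.Perm NF where
  toFun p := ⟨rstep j p.1, rnd_rstep j p.2⟩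
  invFun p := ⟨rstep' j p.1, rnd_rstep' j p.2⟩
  left_inv p := Subtype.ext (rstep'_rstep j p.2)
  right_inv p := Subtype.ext (rstep_rstep' j p.2)

lemma Req_delta (i : ZMod 3) (x : NF) :
    Req i (Req (i + 1) x) = ⟨(x.1.1 + 1, x.1.2.map (· + 1)), rnd_map1 x.2⟩ :=
  Subtype.ext (rstep_delta i x.2)

lemma Req_rel (i : ZMod 3) :
    Req i * Req (i + 1) = Req (i + 1) * Req (i + 2) := by
  ext x
  rw [Equiv.Perm.mul_apply, Equiv.Perm.mul_apply, Req_delta i x,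
    show (i + 2 : ZMod 3) = (i + 1) + 1 from by ring, Req_delta (i + 1) x]

def psi : B3 →* Equiv.Perm NF :=
  PresentedGroup.toGroup (f := fun j => (Req j).symm) (by
    rintro r ⟨i, rfl⟩
    simp only [map_mul, map_inv, FreeGroup.lift_apply_of]
    rw [mul_inv_eq_one]
    have h := Req_rel i
    have h2 : (Req (i + 1))⁻¹ * (Req i)⁻¹ = (Req (i + 2))⁻¹ * (Req (i + 1))⁻¹ := by
      rw [← mul_inv_rev, ← mul_inv_rev, h]
    simpa only [Equiv.Perm.inv_def] using h2)

lemma psi_of (j : ZMod 3) : psi (a j) = (Req j).symm :=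
  PresentedGroup.toGroup.of _

/- ## relations in B3 -/

lemma braid_rel (i : ZMod 3) : a (i + 1) * a i = a (i + 2) * a (i + 1) := by
  have h : (PresentedGroup.mk braidRels) (FreeGroup.of (i+1) * FreeGroup.of i *
      (FreeGroup.of (i+2) * FreeGroup.of (i+1))⁻¹) = 1 := by
    apply (QuotientGroup.eq_one_iff _).2
    exact Subgroup.subset_normalClosure ⟨i, rfl⟩
  rw [map_mul, map_inv, map_mul, map_mul, mul_inv_eq_one] at h
  exact h

lemma delta_eq (i : ZMod 3) : a (i + 1) * a i = δ := by
  have e1 : a 2 * a 1 = δ := rfl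
  have e0 : a 1 * a 0 = δ := by
    have h := braid_rel 0
    rw [show (0:ZMod 3)+1 = 1 by decide, show (0:ZMod 3)+2 = 2 by decide] at h
    rw [h]; exact e1
  have e2 : a 0 * a 2 = δ := by
    have h := braid_rel 2
    rw [show (2:ZMod 3)+1 = 0 by decide, show (2:ZMod 3)+2 = 1 by decide] at h
    rw [h]; exact e0
  rcases (by decide : ∀ j : ZMod 3, j = 0 ∨ j = 1 ∨ j = 2) i with rfl | rfl | rfl
  · rw [show (0:ZMod 3)+1 = 1 by decide]; exact e0
  · rw [show (1:ZMod 3)+1 = 2 by decide]; exact e1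
  · rw [show (2:ZMod 3)+1 = 0 by decide]; exact e2

lemma delta_eq' (i : ZMod 3) : a i * a (i + 2) = δ := by
  have h := delta_eq (i + 2); rwa [z3 i] at h

lemma a_mul_delta (i : ZMod 3) : a i * δ = δ * a (i + 1) := by
  have h1 : a (i + 2) * a (i + 1) = δ := by
    have h := delta_eq (i + 1); rwa [show i+1+1 = i+2 from by ring] at h
  calc a i * δ = a i * (a (i + 2) * a (i + 1)) := by rw [h1]
    _ = (a i * a (i + 2)) * a (i + 1) := by rw [mul_assoc]
    _ = δ * a (i + 1) := by rw [delta_eq']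

lemma wordProd_nil : wordProd [] = 1 := rfl

lemma wordProd_cons (i : ZMod 3) (t : List (ZMod 3)) :
    wordProd (i :: t) = a i * wordProd t := by simp [wordProd]

lemma wordProd_append (l1 l2 : List (ZMod 3)) :
    wordProd (l1 ++ l2) = wordProd l1 * wordProd l2 := by simp [wordProd]

lemma wordProd_singleton (j : ZMod 3) : wordProd [j] = a j := by simp [wordProd]

lemma wordProd_mul_delta (m : List (ZMod 3)) :
    wordProd m * δ = δ * wordProd (m.map (· + 1)) := by
  induction m with
  | nil => simp [wordProd]
  | cons i t ih =>
    rw [List.map_cons, wordProd_cons, wordProd_cons, mul_assoc, ih, ← mul_assoc,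
      a_mul_delta, mul_assoc]

def eval (p : ℤ × List (ZMod 3)) : B3 := δ ^ p.1 * wordProd p.2.reverse

lemma eval_rstep (j : ZMod 3) (p : ℤ × List (ZMod 3)) :
    eval (rstep j p) = eval p * a j := by
  obtain ⟨u, l⟩ := p
  match l with
  | [] =>
    rw [rstep_nil]
    simp [eval, wordProd_cons, wordProd_nil]
  | i :: t =>
    by_cases hc : j = i ∨ j = i + 1
    · rw [rstep_cons_pos hc]
      show δ ^ u * wordProd (j :: i :: t).reverse = (δ ^ u * wordProd (i :: t).reverse) * a j
      rw [List.reverse_cons, wordProd_append, wordProd_singleton, ← mul_assoc]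
    · have hj : j = i + 2 := z1 i j hc
      rw [rstep_cons_neg hc]
      show δ ^ (u + 1) * wordProd (t.map (· + 1)).reverse
          = (δ ^ u * wordProd (i :: t).reverse) * a j
      rw [hj, ← List.map_reverse, zpow_add_one, List.reverse_cons, wordProd_append,
        wordProd_singleton]
      calc δ ^ u * δ * wordProd (t.reverse.map (· + 1))
          = δ ^ u * (δ * wordProd (t.reverse.map (· + 1))) := by rw [mul_assoc]
        _ = δ ^ u * (wordProd t.reverse * δ) := by rw [wordProd_mul_delta]
        _ = δ ^ u * (wordProd t.reverse * (a i * a (i + 2))) := by rw [delta_eq']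
        _ = δ ^ u * (wordProd t.reverse * a i) * a (i + 2) := by
            rw [← mul_assoc, ← mul_assoc, ← mul_assoc]

/- ## the normal form map -/

def x0 : NF := ⟨(0, []), List.isChain_nil⟩

def nf (α : B3) : NF := psi α⁻¹ x0

def evalNF (x : NF) : B3 := eval x.1

lemma evalNF_Req (j : ZMod 3) (x : NF) : evalNF (Req j x) = evalNF x * a j :=
  eval_rstep j x.1

lemma eval_psi (g : B3) : ∀ x : NF, evalNF (psi g x) = evalNF x * g⁻¹ := by
  have hg : g ∈ Subgroup.closure (Set.range (PresentedGroup.of : ZMod 3 → B3)) := by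
    rw [PresentedGroup.closure_range_of]; exact Subgroup.mem_top g
  induction hg using Subgroup.closure_induction with
  | mem y hy =>
    obtain ⟨j, rfl⟩ := hy
    show ∀ x : NF, evalNF (psi (a j) x) = evalNF x * (a j)⁻¹
    intro x
    have h1 : evalNF x = evalNF ((Req j).symm x) * a j := by
      conv_lhs => rw [← (Req j).apply_symm_apply x]
      exact evalNF_Req j ((Req j).symm x)
    rw [psi_of, h1, mul_assoc, mul_inv_cancel, mul_one]
  | one => intro x; simp
  | mul y z hy hz ihy ihz =>
    intro x
    rw [map_mul, Equiv.Perm.mul_apply, ihy, ihz, mul_inv_rev, mul_assoc]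
  | inv y hy ihy =>
    intro x
    have h := ihy (psi y⁻¹ x)
    rw [← Equiv.Perm.mul_apply, ← map_mul, mul_inv_cancel, map_one,
      Equiv.Perm.one_apply] at h
    rw [inv_inv, h, mul_assoc, inv_mul_cancel, mul_one]

lemma nf_mul_gen (α : B3) (j : ZMod 3) : nf (α * a j) = Req j (nf α) := by
  unfold nf
  rw [mul_inv_rev, map_mul, Equiv.Perm.mul_apply, map_inv, psi_of,
    Equiv.Perm.inv_def, Equiv.symm_symm]

lemma nf_one : nf 1 = x0 := by simp [nf]

lemma nf_mul_delta (α : B3) :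
    nf (α * δ) = ⟨((nf α).1.1 + 1, (nf α).1.2.map (· + 1)), rnd_map1 (nf α).2⟩ := by
  rw [show α * δ = (α * a 2) * a 1 from by rw [show δ = a 2 * a 1 from rfl, mul_assoc],
    nf_mul_gen, nf_mul_gen, show (2 : ZMod 3) = 1 + 1 from by decide]
  exact Req_delta 1 (nf α)

lemma nf_delta_pow (u : ℤ) : (nf (δ ^ u)).1 = (u, []) := by
  induction u using Int.induction_on with
  | zero => rw [zpow_zero, nf_one]; rfl
  | succ n ih =>
    have h1 : (nf (δ ^ (n:ℤ))).1.1 = n := by rw [ih]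
    have h2 : (nf (δ ^ (n:ℤ))).1.2 = [] := by rw [ih]
    have h : (nf (δ ^ (n:ℤ) * δ)).1
        = ((nf (δ ^ (n:ℤ))).1.1 + 1, (nf (δ ^ (n:ℤ))).1.2.map (· + 1)) :=
      congrArg Subtype.val (nf_mul_delta (δ ^ (n:ℤ)))
    rw [zpow_add_one, h, h1, h2]
    rfl
  | pred n ih =>
    have e : δ ^ (-(n:ℤ) - 1) * δ = δ ^ (-(n:ℤ)) := by
      rw [← zpow_add_one]; congr 1; ring
    have h := nf_mul_delta (δ ^ (-(n:ℤ) - 1))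
    rw [e] at h
    have h' : ((nf (δ ^ (-(n:ℤ) - 1))).1.1 + 1, (nf (δ ^ (-(n:ℤ) - 1))).1.2.map (· + 1))
        = ((-(n:ℤ)), ([] : List (ZMod 3))) := by rw [← ih, h]
    rw [Prod.mk.injEq] at h'
    obtain ⟨hA, hB⟩ := h'
    have hB' : (nf (δ ^ (-(n:ℤ) - 1))).1.2 = [] := List.map_eq_nil_iff.mp hB
    have hA' : (nf (δ ^ (-(n:ℤ) - 1))).1.1 = -(n:ℤ) - 1 := by omega
    rw [Prod.ext_iff]
    exact ⟨hA', hB'⟩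

lemma rstep_prepend {j : ZMod 3} {t : List (ZMod 3)} (h : RND (j :: t)) (u : ℤ) :
    rstep j (u, t) = (u, j :: t) := by
  match t with
  | [] => rfl
  | k :: t' => exact rstep_cons_pos (rnd_rel h) u t'

lemma nf_eval (l : List (ZMod 3)) (h : RND l) (u : ℤ) :
    (nf (δ ^ u * wordProd l.reverse)).1 = (u, l) := by
  induction l with
  | nil => rw [List.reverse_nil, wordProd_nil, mul_one]; exact nf_delta_pow u
  | cons j t ih =>
    rw [List.reverse_cons, wordProd_append, wordProd_singleton, ← mul_assoc, nf_mul_gen]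
    show rstep j (nf (δ ^ u * wordProd t.reverse)).1 = (u, j :: t)
    rw [ih h.tail]
    exact rstep_prepend h u

/- ## main theorem -/

/-- Garside normal form (Xu): every 3-braid is uniquely `δ^u P` with `P` a nondecreasing
positive word. -/
theorem garside_normal_form (α : B3) :
    ∃ u : ℤ, ∃ l : List (ZMod 3), NDWord l ∧ α = δ ^ u * wordProd l ∧
      ∀ (u' : ℤ) (l' : List (ZMod 3)), NDWord l' → α = δ ^ u' * wordProd l' →
        u' = u ∧ l' = l := by
  refine ⟨(nf α).1.1, (nf α).1.2.reverse, ?_, ?_, ?_⟩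
  · exact List.isChain_reverse.mpr (nf α).2
  · have h := eval_psi α⁻¹ x0
    rw [inv_inv] at h
    have hx0 : evalNF x0 = 1 := by simp [evalNF, eval, x0, wordProd]
    rw [hx0, one_mul] at h
    exact h.symm
  · intro u' l' hnd heq
    have hr : RND l'.reverse := List.isChain_reverse.mpr hnd
    have key : (nf α).1 = (u', l'.reverse) := by
      rw [heq, show wordProd l' = wordProd l'.reverse.reverse from by
        rw [List.reverse_reverse]]
      exact nf_eval l'.reverse hr u'
    have h1 : (nf α).1.1 = u' := by rw [key]
    have h2 : (nf α).1.2 = l'.reverse := by rw [key]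
    exact ⟨h1.symm, by rw [h2, List.reverse_reverse]⟩

end Braid
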